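/- arXiv:2110.14321 — 2 statements merged into one kernel-verified Lean document; each statement's English description precedes it below -/
import Mathlib

section
/- Let the real numbers λ_1,…,λ_n be linearly independent over the field of rational numbers, let c_1,…,c_n be complex numbers, let f(x)=∑_{k=1}^n c_k e^{iλ_k x}, and assume that r = inf_{x∈ℝ} |f(x)| > 0. Then r ≥ min_{ε∈{−1,1}^n} |∑_{k=1}^n ε_k |c_k||. -/
open Complex Finset Filter intervalIntegral

noncomputable section

lemma rot_lemma (p q v : ℝ) (hp : 0 ≤ p) (hq : 0 ≤ q) (w : ℂ) (hw : ‖w‖ = q)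
    (h1 : |p - q| ≤ v) (h2 : v ≤ p + q) :
    ∃ z : ℂ, ‖z‖ = 1 ∧ ‖p * z + w‖ = v := by
  by_cases hw0 : w = 0
  · have hq0 : q = 0 := by simpa [hw0] using hw.symm
    have hv : v = p := by
      rw [hq0] at h1 h2; simp at h1 h2
      exact le_antisymm h2 (abs_le.mp h1).2
    exact ⟨1, by simp, by simp [hw0, hv, Complex.norm_real, _root_.abs_of_nonneg hp]⟩
  · have hqpos : 0 < q := by
      rcases hq.lt_or_eq with h | h; · exact h
      · exact absurd (by rw [← norm_eq_zero, hw, ← h]) hw0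
    set d : ℂ := w / q with hd
    have habsd : ‖d‖ = 1 := by
      rw [hd, norm_div, hw, Complex.norm_real, Real.norm_eq_abs, abs_of_pos hqpos, div_self hqpos.ne']
    have hwd : w = q * d := by
      rw [hd, mul_comm, div_mul_cancel₀]
      exact_mod_cast hqpos.ne'
    set h : ℝ → ℝ := fun θ => ‖p * Complex.exp (θ * Complex.I) + q‖ with hh
    have hcont : Continuous h := by
      apply continuous_norm.comp
      fun_prop
    have h0 : h 0 = p + q := by
      simp only [hh]
      rw [Complex.ofReal_zero, zero_mul, Complex.exp_zero, mul_one]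
      rw [show ((p:ℂ) + q) = ((p + q : ℝ) : ℂ) by push_cast; ring]
      rw [Complex.norm_real, Real.norm_eq_abs, _root_.abs_of_nonneg (by linarith)]
    have hpi : h Real.pi = |p - q| := by
      simp only [hh]
      rw [Complex.exp_pi_mul_I]
      rw [show ((p:ℂ) * (-1) + q) = ((q - p : ℝ) : ℂ) by push_cast; ring]
      rw [Complex.norm_real, Real.norm_eq_abs, abs_sub_comm]
    have hmem : v ∈ Set.Icc (h Real.pi) (h 0) := by rw [h0, hpi]; exact ⟨h1, h2⟩
    obtain ⟨θ, _, hθ⟩ := intermediate_value_Icc' Real.pi_nonneg hcont.continuousOn hmem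
    refine ⟨Complex.exp (θ * Complex.I) * d, ?_, ?_⟩
    · rw [norm_mul, habsd, mul_one, Complex.norm_exp]
      simp
    · have : (p : ℂ) * (Complex.exp (θ * Complex.I) * d) + w
          = (p * Complex.exp (θ * Complex.I) + q) * d := by rw [hwd]; ring
      rw [this, norm_mul, habsd, mul_one]
      exact hθ

lemma achieve {n : ℕ} (a : Fin n → ℝ) (ha : ∀ k, 0 ≤ a k) (s : Finset (Fin n)) :
    ∀ v : ℝ, 0 ≤ v → (∀ k ∈ s, a k ≤ v) → v ≤ ∑ k ∈ s, a k →
    ∃ z : Fin n → ℂ, (∀ k, ‖z k‖ = 1) ∧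
      ‖∑ k ∈ s, (a k : ℂ) * z k‖ = v := by
  induction s using Finset.induction_on with
  | empty =>
    intro v hv0 _ hvs
    simp only [Finset.sum_empty] at hvs ⊢
    exact ⟨fun _ => 1, fun _ => by simp, by simp [le_antisymm hvs hv0]⟩
  | @insert b s' hb ih =>
    intro v hv0 hmax hsum
    set S' : ℝ := ∑ k ∈ s', a k with hS'
    have hS'0 : 0 ≤ S' := Finset.sum_nonneg fun k _ => ha k
    have hsum' : v ≤ a b + S' := by rwa [Finset.sum_insert hb] at hsum
    set q : ℝ := min v S' with hqdef
    have hq0 : 0 ≤ q := le_min hv0 hS'0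
    obtain ⟨z', hz'u, hz'a⟩ := ih q hq0
      (fun k hk => le_min (hmax k (Finset.mem_insert_of_mem hk))
        (Finset.single_le_sum (fun k _ => ha k) hk))
      (min_le_right _ _)
    have hab : a b ≤ v := hmax b (Finset.mem_insert_self b s')
    have h1 : |a b - q| ≤ v := by
      rw [abs_le]
      constructor <;> [linarith [ha b, min_le_left v S']; linarith [min_le_left v S']]
    have h2 : v ≤ a b + q := by
      rcases le_total v S' with h | h
      · rw [hqdef, min_eq_left h]; linarith [ha b]
      · rw [hqdef, min_eq_right h]; exact hsum'
    obtain ⟨zb, hzb1, hzba⟩ := rot_lemma (a b) q v (ha b) hq0 _ hz'a h1 h2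
    refine ⟨Function.update z' b zb, ?_, ?_⟩
    · intro k
      rcases eq_or_ne k b with rfl | hk
      · simp [hzb1]
      · simp [Function.update_of_ne hk, hz'u k]
    · rw [Finset.sum_insert hb]
      have hrest : ∑ k ∈ s', (a k : ℂ) * Function.update z' b zb k
          = ∑ k ∈ s', (a k : ℂ) * z' k := by
        apply Finset.sum_congr rfl
        intro k hk
        rw [Function.update_of_ne (by rintro rfl; exact hb hk)]
      rw [hrest, Function.update_self]
      exact hzba

lemma polygon {n : ℕ} (a : Fin n → ℝ) (ha : ∀ k, 0 ≤ a k)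
    (hnd : ∀ j, 2 * a j ≤ ∑ k, a k) :
    ∃ z : Fin n → ℂ, (∀ k, ‖z k‖ = 1) ∧ ∑ k, (a k : ℂ) * z k = 0 := by
  rcases isEmpty_or_nonempty (Fin n) with hemp | hne
  · exact ⟨fun _ => 1, fun k => (hemp.false k).elim, by simp⟩
  · obtain ⟨j, hj⟩ := Finite.exists_max a
    by_cases haj : a j = 0
    · refine ⟨fun _ => 1, fun _ => by simp, ?_⟩
      have : ∀ k, a k = 0 := fun k => le_antisymm ((hj k).trans haj.le) (ha k)
      simp [this]
    · have hsplit : ∑ k ∈ Finset.univ.erase j, a k + a j = ∑ k, a k :=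
        Finset.sum_erase_add _ _ (Finset.mem_univ j)
      obtain ⟨z', hz'u, hz'a⟩ := achieve a ha (Finset.univ.erase j) (a j) (ha j)
        (fun k _ => hj k) (by linarith [hnd j])
      have hajpos : 0 < a j := (ha j).lt_of_ne (Ne.symm haj)
      set w : ℂ := ∑ k ∈ Finset.univ.erase j, (a k : ℂ) * z' k with hwdef
      refine ⟨Function.update z' j (-w / a j), ?_, ?_⟩
      · intro k
        rcases eq_or_ne k j with rfl | hk
        · rw [Function.update_self, norm_div, norm_neg, hz'a,
            Complex.norm_real, Real.norm_eq_abs, abs_of_pos hajpos, div_self hajpos.ne']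
        · simp [Function.update_of_ne hk, hz'u k]
      · rw [← Finset.sum_erase_add _ _ (Finset.mem_univ j)]
        have hrest : ∑ k ∈ Finset.univ.erase j, (a k : ℂ) * Function.update z' j (-w / a j) k
            = w := by
          rw [hwdef]
          apply Finset.sum_congr rfl
          intro k hk
          rw [Function.update_of_ne (Finset.ne_of_mem_erase hk)]
        rw [hrest, Function.update_self]
        have hne0 : (a j : ℂ) ≠ 0 := by exact_mod_cast hajpos.ne'
        field_simp
        ring


lemma mean_exp (μ : ℝ) :
    Tendsto (fun T : ℝ => (T : ℂ)⁻¹ * ∫ x in (0:ℝ)..T, Complex.exp (Complex.I * μ * x))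
      atTop (nhds (if μ = 0 then 1 else 0)) := by
  rcases eq_or_ne μ 0 with rfl | hμ
  · simp only [if_pos rfl]
    apply Tendsto.congr' (f₁ := fun _ : ℝ => (1:ℂ))
    · filter_upwards [eventually_gt_atTop (0:ℝ)] with T hT
      simp only [Complex.ofReal_zero, mul_zero, zero_mul, Complex.exp_zero]
      rw [intervalIntegral.integral_const, sub_zero, Complex.real_smul, mul_one,
        inv_mul_cancel₀ (by exact_mod_cast hT.ne')]
    · exact tendsto_const_nhds
  · simp only [if_neg hμ]
    have hc : Complex.I * μ ≠ 0 := by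
      simp [Complex.I_ne_zero, Complex.ofReal_eq_zero, hμ]
    have key : ∀ T : ℝ, (∫ x in (0:ℝ)..T, Complex.exp (Complex.I * μ * x))
        = (Complex.exp (Complex.I * μ * T) - 1) / (Complex.I * μ) := by
      intro T
      rw [integral_exp_mul_complex hc]
      simp
    rw [show (0:ℂ) = 0 from rfl]
    apply squeeze_zero_norm' (a := fun T : ℝ => |T|⁻¹ * (2 / ‖Complex.I * ↑μ‖))
    · filter_upwards [eventually_gt_atTop (0:ℝ)] with T hT
      rw [key T, norm_mul]
      gcongr
      · simp [Complex.norm_real]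
      · rw [norm_div]
        gcongr
        calc ‖Complex.exp (Complex.I * μ * T) - 1‖
            ≤ ‖Complex.exp (Complex.I * μ * T)‖ + ‖(1:ℂ)‖ := norm_sub_le _ _
          _ ≤ 2 := by
              rw [Complex.norm_exp]
              simp only [Complex.mul_re, Complex.I_re, Complex.ofReal_re, Complex.I_im,
                Complex.ofReal_im]
              norm_num
    · have : Tendsto (fun T : ℝ => |T|⁻¹) atTop (nhds 0) := by
        apply Tendsto.comp tendsto_inv_atTop_zero
        exact tendsto_abs_atTop_atTop
      simpa using this.mul_const (2 / ‖Complex.I * μ‖)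

/-- auxiliary: the rotated exponential -/
def uu (l : ℝ) (t : ℂ) (x : ℝ) : ℂ :=
  Complex.exp (Complex.I * l * x) * (starRingEnd ℂ) t

/-- auxiliary: the nonnegative weight `(1 + Re u)/2` -/
def gg (l : ℝ) (t : ℂ) (x : ℝ) : ℝ := (1 + (uu l t x).re) / 2

lemma abs_exp_I_mul (l x : ℝ) : ‖Complex.exp (Complex.I * l * x)‖ = 1 := by
  rw [show Complex.I * l * x = (l * x : ℝ) * Complex.I by push_cast; ring,
    Complex.norm_exp_ofReal_mul_I]

lemma abs_uu (l : ℝ) {t : ℂ} (ht : ‖t‖ = 1) (x : ℝ) :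
    ‖uu l t x‖ = 1 := by
  rw [uu, norm_mul, abs_exp_I_mul, Complex.norm_conj, ht, one_mul]

lemma normSq_uu (l : ℝ) {t : ℂ} (ht : ‖t‖ = 1) (x : ℝ) :
    Complex.normSq (uu l t x) = 1 := by
  rw [← Complex.sq_norm, abs_uu l ht x, one_pow]

lemma gg_nonneg (l : ℝ) {t : ℂ} (ht : ‖t‖ = 1) (x : ℝ) : 0 ≤ gg l t x := by
  have h := Complex.abs_re_le_norm (uu l t x)
  rw [abs_uu l ht x] at h
  have := neg_le_of_abs_le h
  rw [gg]; linarith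

lemma gg_le_one (l : ℝ) {t : ℂ} (ht : ‖t‖ = 1) (x : ℝ) : gg l t x ≤ 1 := by
  have h := Complex.abs_re_le_norm (uu l t x)
  rw [abs_uu l ht x] at h
  have := le_of_abs_le h
  rw [gg]; linarith

lemma gg_le {l x ε : ℝ} {t : ℂ} (ht : ‖t‖ = 1)
    (h : ε ≤ ‖Complex.exp (Complex.I * l * x) - t‖) (hε : 0 ≤ ε) :
    gg l t x ≤ 1 - ε ^ 2 / 4 := by
  have htt : t * (starRingEnd ℂ) t = 1 := by
    rw [Complex.mul_conj, ← Complex.sq_norm, ht]; norm_num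
  have habs : ‖1 - uu l t x‖ = ‖Complex.exp (Complex.I * l * x) - t‖ := by
    have : (1 : ℂ) - uu l t x = -((Complex.exp (Complex.I * l * x) - t) * (starRingEnd ℂ) t) := by
      rw [uu]; rw [sub_mul, ← htt]; ring
    rw [this, norm_neg, norm_mul, Complex.norm_conj, ht, mul_one]
  have hns : Complex.normSq (1 - uu l t x) = 2 - 2 * (uu l t x).re := by
    rw [Complex.normSq_sub]
    rw [Complex.normSq_one, normSq_uu l ht x]
    simp only [one_mul, Complex.conj_re]
    ring
  have h2 : ε ^ 2 ≤ 2 - 2 * (uu l t x).re := by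
    rw [← hns, ← Complex.sq_norm, habs]
    exact pow_le_pow_left₀ hε h 2
  rw [gg]; linarith

lemma factor_expand {t : ℂ} (ht : ‖t‖ = 1) (l x : ℝ) (N : ℕ) :
    ((gg l t x : ℝ) : ℂ) ^ N * 4 ^ N =
      (∑ a ∈ Finset.range (N + 1), uu l t x ^ a * (N.choose a : ℂ)) *
        (∑ b ∈ Finset.range (N + 1), (starRingEnd ℂ) (uu l t x) ^ b * (N.choose b : ℂ)) := by
  have huu : uu l t x * (starRingEnd ℂ) (uu l t x) = 1 := by
    rw [Complex.mul_conj, normSq_uu l ht x, Complex.ofReal_one]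
  have hre : ((uu l t x).re : ℂ) * 2 = uu l t x + (starRingEnd ℂ) (uu l t x) := by
    rw [Complex.add_conj]; push_cast; ring
  have h1 : ((gg l t x : ℝ) : ℂ) * 4 = (uu l t x + 1) * ((starRingEnd ℂ) (uu l t x) + 1) := by
    rw [gg]
    push_cast
    linear_combination hre - huu
  calc ((gg l t x : ℝ) : ℂ) ^ N * 4 ^ N
      = (((gg l t x : ℝ) : ℂ) * 4) ^ N := by rw [mul_pow]
    _ = (uu l t x + 1) ^ N * ((starRingEnd ℂ) (uu l t x) + 1) ^ N := by rw [h1, mul_pow]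
    _ = _ := by rw [add_pow, add_pow]; simp

lemma kronecker {n : ℕ} (lam : Fin n → ℝ)
    (hindep : ∀ r : Fin n → ℚ, (∑ k, (r k : ℝ) * lam k) = 0 → ∀ k, r k = 0)
    (t : Fin n → ℂ) (ht : ∀ k, ‖t k‖ = 1) {ε : ℝ} (hε : 0 < ε) (hε1 : ε ≤ 1) :
    ∃ x : ℝ, ∀ k, ‖Complex.exp (Complex.I * lam k * x) - t k‖ < ε := by
  by_contra hcon
  push_neg at hcon
  set q : ℝ := 1 - ε ^ 2 / 4 with hqdef
  have hq0 : (0:ℝ) < q := by rw [hqdef]; nlinarith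
  have hq1 : q < 1 := by rw [hqdef]; nlinarith
  have hgcont : ∀ k, Continuous fun x : ℝ => gg (lam k) (t k) x := by
    intro k; unfold gg uu; fun_prop
  have key : ∀ N : ℕ,
      (∑ a ∈ Finset.range (N + 1), ((N.choose a : ℝ)) ^ 2) ^ n ≤ q ^ N * (4:ℝ) ^ (N * n) := by
    intro N
    classical
    set Λ : Finset (Fin n → ℕ) := Fintype.piFinset (fun _ => Finset.range (N + 1)) with hΛ
    set freq : (Fin n → ℕ) → ℝ := fun A => ∑ k, (A k : ℝ) * lam k with hfreq
    set w : (Fin n → ℕ) → ℂ := fun A => ∏ k, (starRingEnd ℂ) (t k) ^ (A k) with hwdef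
    set Q : ℝ → ℝ := fun x => ∏ k, (gg (lam k) (t k) x) ^ N with hQ
    set c : (Fin n → ℕ) → (Fin n → ℕ) → ℂ :=
      fun A B => ((∏ k, (N.choose (A k) : ℝ)) * (∏ k, (N.choose (B k) : ℝ)) : ℝ)
        * (w A * (starRingEnd ℂ) (w B)) with hc
    -- the exponential-product identity
    have hsum : ∀ (A : Fin n → ℕ) (x : ℝ),
        ∑ k, (A k : ℂ) * (Complex.I * lam k * x) = Complex.I * (freq A : ℝ) * x := by
      intro A x
      simp only [hfreq]
      push_cast
      rw [Finset.mul_sum, Finset.sum_mul]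
      exact Finset.sum_congr rfl fun k _ => by ring
    have hP : ∀ (A : Fin n → ℕ) (x : ℝ),
        ∏ k, uu (lam k) (t k) x ^ (A k) = Complex.exp (Complex.I * (freq A : ℝ) * x) * w A := by
      intro A x
      calc ∏ k, uu (lam k) (t k) x ^ A k
          = (∏ k, Complex.exp (Complex.I * lam k * x) ^ A k)
            * ∏ k, (starRingEnd ℂ) (t k) ^ A k := by
            rw [← Finset.prod_mul_distrib]
            exact Finset.prod_congr rfl fun k _ => by rw [uu, mul_pow]
        _ = Complex.exp (Complex.I * (freq A : ℝ) * x) * w A := by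
            simp only [hwdef]
            congr 1
            rw [← hsum A x, Complex.exp_sum]
            exact Finset.prod_congr rfl fun k _ => (Complex.exp_nat_mul _ _).symm
    have hPconj : ∀ (A : Fin n → ℕ) (x : ℝ),
        ∏ k, (starRingEnd ℂ) (uu (lam k) (t k) x) ^ (A k)
          = Complex.exp (-(Complex.I * (freq A : ℝ) * x)) * (starRingEnd ℂ) (w A) := by
      intro A x
      have h0 : (∏ k, (starRingEnd ℂ) (uu (lam k) (t k) x) ^ A k)
          = (starRingEnd ℂ) (∏ k, uu (lam k) (t k) x ^ A k) := by
        rw [map_prod]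
        exact Finset.prod_congr rfl fun k _ => by rw [map_pow]
      rw [h0, hP A x, map_mul, ← Complex.exp_conj]
      congr 2
      simp only [map_mul, Complex.conj_I, Complex.conj_ofReal]
      ring
    have hexpand : ∀ x : ℝ, ((Q x : ℝ) : ℂ) * 4 ^ (N * n)
        = ∑ A ∈ Λ, ∑ B ∈ Λ, c A B
            * Complex.exp (Complex.I * ((freq A - freq B : ℝ) : ℝ) * x) := by
      intro x
      have hcard : (4:ℂ) ^ (N * n) = ∏ _k : Fin n, (4:ℂ) ^ N := by
        rw [Finset.prod_const, Finset.card_univ, Fintype.card_fin, ← pow_mul, mul_comm]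
      have hQcast : ((Q x : ℝ) : ℂ) = ∏ k, ((gg (lam k) (t k) x : ℝ) : ℂ) ^ N := by
        simp only [hQ]; push_cast; rfl
      calc ((Q x : ℝ) : ℂ) * 4 ^ (N * n)
          = ∏ k, (((gg (lam k) (t k) x : ℝ) : ℂ) ^ N * 4 ^ N) := by
            rw [hQcast, hcard, ← Finset.prod_mul_distrib]
        _ = ∏ k, ((∑ a ∈ Finset.range (N + 1), uu (lam k) (t k) x ^ a * (N.choose a : ℂ))
              * (∑ b ∈ Finset.range (N + 1),
                  (starRingEnd ℂ) (uu (lam k) (t k) x) ^ b * (N.choose b : ℂ))) :=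
            Finset.prod_congr rfl fun k _ => factor_expand (ht k) (lam k) x N
        _ = (∑ A ∈ Λ, ∏ k, uu (lam k) (t k) x ^ A k * (N.choose (A k) : ℂ))
            * (∑ B ∈ Λ, ∏ k, (starRingEnd ℂ) (uu (lam k) (t k) x) ^ B k
                * (N.choose (B k) : ℂ)) := by
            rw [Finset.prod_mul_distrib, Finset.prod_univ_sum, Finset.prod_univ_sum, hΛ]
        _ = ∑ A ∈ Λ, ∑ B ∈ Λ, c A B
              * Complex.exp (Complex.I * ((freq A - freq B : ℝ) : ℝ) * x) := by
            rw [Finset.sum_mul_sum]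
            refine Finset.sum_congr rfl fun A _ => Finset.sum_congr rfl fun B _ => ?_
            rw [Finset.prod_mul_distrib, Finset.prod_mul_distrib, hP A x, hPconj B x]
            have hee : Complex.exp (Complex.I * ((freq A - freq B : ℝ) : ℝ) * x)
                = Complex.exp (Complex.I * (freq A : ℝ) * x)
                  * Complex.exp (-(Complex.I * (freq B : ℝ) * x)) := by
              rw [← Complex.exp_add]; congr 1; push_cast; ring
            rw [hee]
            simp only [hc]
            push_cast
            ring
    -- the mean of Q converges to the diagonal sum
    have hQcont : Continuous Q := by
      simp only [hQ]
      exact continuous_finset_prod _ fun k _ => (hgcont k).pow N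
    have hint : ∀ T : ℝ, (∫ x in (0:ℝ)..T, ((Q x : ℝ) : ℂ) * 4 ^ (N * n))
        = ∑ A ∈ Λ, ∑ B ∈ Λ, c A B
            * ∫ x in (0:ℝ)..T, Complex.exp (Complex.I * ((freq A - freq B : ℝ) : ℝ) * x) := by
      intro T
      have hconte : ∀ (A B : Fin n → ℕ), Continuous fun x : ℝ =>
          c A B * Complex.exp (Complex.I * ((freq A - freq B : ℝ) : ℝ) * x) := by
        intro A B
        apply continuous_const.mul
        apply Complex.continuous_exp.comp
        fun_prop
      have e1 : (∫ x in (0:ℝ)..T, ((Q x : ℝ) : ℂ) * 4 ^ (N * n))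
          = ∫ x in (0:ℝ)..T, ∑ A ∈ Λ, ∑ B ∈ Λ, c A B
              * Complex.exp (Complex.I * ((freq A - freq B : ℝ) : ℝ) * x) :=
        intervalIntegral.integral_congr fun x _ => hexpand x
      rw [e1, intervalIntegral.integral_finset_sum]
      · refine Finset.sum_congr rfl fun A _ => ?_
        rw [intervalIntegral.integral_finset_sum]
        · exact Finset.sum_congr rfl fun B _ => intervalIntegral.integral_const_mul _ _
        · exact fun B _ => (hconte A B).intervalIntegrable 0 T
      · intro A _
        exact (continuous_finset_sum Λ fun B _ => hconte A B).intervalIntegrable 0 T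
    have hmean : Tendsto
        (fun T : ℝ => (T : ℂ)⁻¹ * ∫ x in (0:ℝ)..T, ((Q x : ℝ) : ℂ) * 4 ^ (N * n)) atTop
        (nhds (∑ A ∈ Λ, ∑ B ∈ Λ, c A B * (if (freq A - freq B : ℝ) = 0 then 1 else 0))) := by
      have hsumT := tendsto_finset_sum Λ (fun A (_ : A ∈ Λ) =>
        tendsto_finset_sum Λ (fun B (_ : B ∈ Λ) =>
          (mean_exp ((freq A - freq B : ℝ))).const_mul (c A B)))
      refine hsumT.congr fun T => ?_
      rw [hint T, Finset.mul_sum]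
      refine Finset.sum_congr rfl fun A _ => ?_
      rw [Finset.mul_sum]
      exact Finset.sum_congr rfl fun B _ => by ring
    -- identify the limit as the diagonal sum
    have hdiag : (∑ A ∈ Λ, ∑ B ∈ Λ, c A B * (if (freq A - freq B : ℝ) = 0 then 1 else 0))
        = ((∑ a ∈ Finset.range (N + 1), ((N.choose a : ℝ)) ^ 2) ^ n : ℝ) := by
      have hiff : ∀ A B : Fin n → ℕ, ((freq A - freq B : ℝ) = 0) ↔ B = A := by
        intro A B
        constructor
        · intro h
          have h' : ∑ k, (((A k : ℚ) - (B k : ℚ) : ℚ) : ℝ) * lam k = 0 := by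
            have e : ∑ k, (((A k : ℚ) - (B k : ℚ) : ℚ) : ℝ) * lam k = freq A - freq B := by
              simp only [hfreq]
              rw [← Finset.sum_sub_distrib]
              refine Finset.sum_congr rfl fun k _ => ?_
              push_cast
              ring
            rw [e, h]
          have h2 := hindep _ h'
          funext k
          have h3 : (A k : ℚ) = B k := by linarith [h2 k, sub_eq_zero.mp (h2 k)]
          exact_mod_cast h3.symm
        · rintro rfl; simp
      have hwabs : ∀ A : Fin n → ℕ, w A * (starRingEnd ℂ) (w A) = 1 := by
        intro A
        have habs : ‖w A‖ = 1 := by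
          simp only [hwdef]
          rw [Complex.norm_prod]
          rw [Finset.prod_eq_one]
          intro k _
          rw [norm_pow, Complex.norm_conj, ht k, one_pow]
        rw [Complex.mul_conj, ← Complex.sq_norm, habs]
        norm_num
      calc (∑ A ∈ Λ, ∑ B ∈ Λ, c A B * (if (freq A - freq B : ℝ) = 0 then 1 else 0))
          = ∑ A ∈ Λ, c A A := by
            refine Finset.sum_congr rfl fun A hA => ?_
            have e : (∑ B ∈ Λ, c A B * (if (freq A - freq B : ℝ) = 0 then 1 else 0))
                = ∑ B ∈ Λ, if B = A then c A B else 0 :=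
              Finset.sum_congr rfl fun B _ => by simp only [hiff A B]; split_ifs <;> ring
            rw [e, Finset.sum_ite_eq' Λ A (fun B => c A B), if_pos hA]
        _ = ∑ A ∈ Λ, (((∏ k, (N.choose (A k) : ℝ)) ^ 2 : ℝ) : ℂ) := by
            refine Finset.sum_congr rfl fun A _ => ?_
            simp only [hc]
            rw [hwabs A, mul_one]
            push_cast
            ring
        _ = _ := by
            have hnat : (∑ A ∈ Fintype.piFinset fun _ : Fin n => Finset.range (N + 1),
                  (∏ k : Fin n, N.choose (A k)) ^ 2)
                = (∑ a ∈ Finset.range (N + 1), N.choose a ^ 2) ^ n := by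
              rw [show ((∑ x ∈ Finset.range (N + 1), N.choose x ^ 2) ^ n : ℕ)
                  = ∏ _k : Fin n, ∑ a ∈ Finset.range (N + 1), N.choose a ^ 2 by
                rw [Finset.prod_const, Finset.card_univ, Fintype.card_fin]]
              rw [Finset.prod_univ_sum]
              exact Finset.sum_congr rfl fun A _ => by rw [← Finset.prod_pow]
            rw [← Complex.ofReal_sum]
            norm_cast
    -- the real-valued mean and its bound
    have hmeanR : Tendsto
        (fun T : ℝ => T⁻¹ * (∫ x in (0:ℝ)..T, Q x) * 4 ^ (N * n)) atTop
        (nhds ((∑ a ∈ Finset.range (N + 1), ((N.choose a : ℝ)) ^ 2) ^ n)) := by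
      rw [hdiag] at hmean
      have h2 := (Complex.continuous_re.tendsto _).comp hmean
      simp only [Function.comp_def, Complex.ofReal_re] at h2
      refine h2.congr fun T => ?_
      have e1 : (∫ x in (0:ℝ)..T, ((Q x : ℝ) : ℂ) * 4 ^ (N * n))
          = (((∫ x in (0:ℝ)..T, Q x) * 4 ^ (N * n) : ℝ) : ℂ) := by
        rw [show (fun x : ℝ => ((Q x : ℝ) : ℂ) * 4 ^ (N * n))
            = fun x : ℝ => ((Q x * 4 ^ (N * n) : ℝ) : ℂ) from funext fun x => by push_cast; ring]
        rw [intervalIntegral.integral_ofReal, intervalIntegral.integral_mul_const]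
      rw [e1]
      rw [show (T : ℂ)⁻¹ * (((∫ x in (0:ℝ)..T, Q x) * 4 ^ (N * n) : ℝ) : ℂ)
          = ((T⁻¹ * (∫ x in (0:ℝ)..T, Q x) * 4 ^ (N * n) : ℝ) : ℂ) by push_cast; ring]
      rw [Complex.ofReal_re]
    have hQ0 : ∀ x, 0 ≤ Q x := by
      intro x
      exact Finset.prod_nonneg fun k _ => pow_nonneg (gg_nonneg (lam k) (ht k) x) N
    have hQbound : ∀ x, Q x ≤ q ^ N := by
      intro x
      obtain ⟨k₀, hk₀⟩ := hcon x
      have hgk : gg (lam k₀) (t k₀) x ≤ q := by rw [hqdef]; exact gg_le (ht k₀) hk₀ hε.le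
      calc Q x = gg (lam k₀) (t k₀) x ^ N
            * ∏ k ∈ Finset.univ.erase k₀, gg (lam k) (t k) x ^ N := by
            simp only [hQ]
            exact (Finset.mul_prod_erase _ _ (Finset.mem_univ k₀)).symm
        _ ≤ q ^ N * 1 := by
            apply mul_le_mul
            · exact pow_le_pow_left₀ (gg_nonneg _ (ht k₀) x) hgk N
            · apply Finset.prod_le_one
              · exact fun k _ => pow_nonneg (gg_nonneg _ (ht k) x) N
              · exact fun k _ => pow_le_one₀ (gg_nonneg _ (ht k) x) (gg_le_one _ (ht k) x)
            · exact Finset.prod_nonneg fun k _ => pow_nonneg (gg_nonneg _ (ht k) x) N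
            · exact pow_nonneg hq0.le N
        _ = q ^ N := mul_one _
    refine le_of_tendsto hmeanR ?_
    filter_upwards [eventually_ge_atTop (1:ℝ)] with T hT
    have hT0 : (0:ℝ) < T := lt_of_lt_of_le one_pos hT
    have hIb : (∫ x in (0:ℝ)..T, Q x) ≤ q ^ N * T := by
      calc (∫ x in (0:ℝ)..T, Q x) ≤ ∫ _x in (0:ℝ)..T, q ^ N := by
            apply intervalIntegral.integral_mono_on hT0.le
              (hQcont.intervalIntegrable 0 T) (intervalIntegrable_const)
            exact fun x _ => hQbound x
        _ = q ^ N * T := by rw [intervalIntegral.integral_const, smul_eq_mul, sub_zero]; ring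
    calc T⁻¹ * (∫ x in (0:ℝ)..T, Q x) * 4 ^ (N * n)
        ≤ T⁻¹ * (q ^ N * T) * 4 ^ (N * n) := by
          apply mul_le_mul_of_nonneg_right _ (by positivity)
          exact mul_le_mul_of_nonneg_left hIb (by positivity)
      _ = q ^ N * 4 ^ (N * n) := by field_simp
  -- derive `1 ≤ (N+1)^n * q^N` and contradict the limit
  have h1N : ∀ N : ℕ, 1 ≤ ((N : ℝ) + 1) ^ n * q ^ N := by
    intro N
    have hcs : (∑ a ∈ Finset.range (N + 1), (N.choose a : ℝ)) ^ 2
        ≤ ((N : ℝ) + 1) * ∑ a ∈ Finset.range (N + 1), (N.choose a : ℝ) ^ 2 := by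
      have h := sq_sum_le_card_mul_sum_sq (s := Finset.range (N + 1))
        (f := fun a => (N.choose a : ℝ))
      simpa using h
    have hsum2 : (∑ a ∈ Finset.range (N + 1), (N.choose a : ℝ)) = 2 ^ N := by
      rw [← Nat.cast_sum, Nat.sum_range_choose]
      push_cast
      ring
    set v : ℝ := ∑ a ∈ Finset.range (N + 1), (N.choose a : ℝ) ^ 2 with hvdef
    have hv : (4:ℝ) ^ N ≤ ((N : ℝ) + 1) * v := by
      calc (4:ℝ) ^ N = ((2:ℝ) ^ N) ^ 2 := by
            rw [← pow_mul, mul_comm, pow_mul]; norm_num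
        _ ≤ ((N : ℝ) + 1) * v := by rw [← hsum2]; exact hcs
    have hNpos : (0:ℝ) < (N : ℝ) + 1 := by positivity
    have hv' : (4:ℝ) ^ N / ((N : ℝ) + 1) ≤ v := by
      rw [div_le_iff₀ hNpos]; nlinarith
    have hkey := key N
    have h1 : ((4:ℝ) ^ N / ((N : ℝ) + 1)) ^ n ≤ q ^ N * ((4:ℝ) ^ N) ^ n := by
      calc ((4:ℝ) ^ N / ((N : ℝ) + 1)) ^ n ≤ v ^ n := by
            apply pow_le_pow_left₀ (by positivity) hv'
        _ ≤ q ^ N * 4 ^ (N * n) := hkey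
        _ = q ^ N * ((4:ℝ) ^ N) ^ n := by rw [pow_mul]
    have hP4 : (0:ℝ) < ((4:ℝ) ^ N) ^ n := by positivity
    rw [div_pow, div_le_iff₀ (by positivity : (0:ℝ) < ((N : ℝ) + 1) ^ n)] at h1
    have h2 : 1 * (((4:ℝ) ^ N) ^ n) ≤ (((N : ℝ) + 1) ^ n * q ^ N) * (((4:ℝ) ^ N) ^ n) := by
      rw [one_mul]
      calc ((4:ℝ) ^ N) ^ n ≤ q ^ N * ((4:ℝ) ^ N) ^ n * ((N : ℝ) + 1) ^ n := h1
        _ = (((N : ℝ) + 1) ^ n * q ^ N) * (((4:ℝ) ^ N) ^ n) := by ring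
    exact le_of_mul_le_mul_right h2 hP4
  have htend : Tendsto (fun N : ℕ => ((N : ℝ) + 1) ^ n * q ^ N) atTop (nhds 0) := by
    have h := (tendsto_pow_const_mul_const_pow_of_lt_one n hq0.le hq1).comp
      (tendsto_add_atTop_nat 1)
    have h2 := h.const_mul q⁻¹
    rw [mul_zero] at h2
    refine h2.congr fun N => ?_
    simp only [Function.comp_apply]
    push_cast
    rw [pow_succ]
    field_simp
  obtain ⟨N, hN⟩ := (htend.eventually (gt_mem_nhds one_pos)).exists
  exact absurd (h1N N) (not_le.mpr hN)


/-- The set of values `|∑ εₖ aₖ|` over all sign choices `εₖ ∈ {-1, 1}`;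
its infimum is the partition minimum of the numbers `a k`. -/
def partitionValues (n : ℕ) (a : Fin n → ℝ) : Set ℝ :=
  {m | ∃ ε : Fin n → ℝ, (∀ k, ε k = 1 ∨ ε k = -1) ∧ m = |∑ k, ε k * a k|}

theorem stmt_5 (n : ℕ) (lam : Fin n → ℝ) (c : Fin n → ℂ)
    (hindep : ∀ r : Fin n → ℚ, (∑ k, (r k : ℝ) * lam k) = 0 → ∀ k, r k = 0)
    (f : ℝ → ℂ)
    (hf : ∀ x : ℝ, f x = ∑ k, c k * Complex.exp (Complex.I * (lam k : ℂ) * (x : ℂ)))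
    (r : ℝ) (hr : r = ⨅ x : ℝ, ‖f x‖) (hrpos : 0 < r) :
    sInf (partitionValues n fun k => ‖c k‖) ≤ r := by
  classical
  set a : Fin n → ℝ := fun k => ‖c k‖ with hadef
  have ha0 : ∀ k, 0 ≤ a k := fun k => norm_nonneg _
  set S : ℝ := ∑ k, a k with hSdef
  have hS0 : 0 ≤ S := Finset.sum_nonneg fun k _ => ha0 k
  have hbdd : BddBelow (Set.range fun x : ℝ => ‖f x‖) :=
    ⟨0, by rintro y ⟨x, rfl⟩; exact norm_nonneg _⟩
  have hrle : ∀ x : ℝ, r ≤ ‖f x‖ := by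
    intro x; rw [hr]; exact ciInf_le hbdd x
  have hpbdd : BddBelow (partitionValues n a) := by
    refine ⟨0, fun m hm => ?_⟩
    obtain ⟨ε, -, hm2⟩ := hm
    exact hm2 ▸ abs_nonneg _
  by_cases hdom : ∃ j, S ≤ 2 * a j
  · -- dominated case : triangle inequality
    obtain ⟨j, hj⟩ := hdom
    set ε : Fin n → ℝ := fun k => if k = j then 1 else -1 with hεdef
    have hS'j : ∑ k ∈ Finset.univ.erase j, a k = S - a j := by
      rw [hSdef, ← Finset.sum_erase_add _ _ (Finset.mem_univ j)]; ring
    have hsumε : ∑ k, ε k * a k = 2 * a j - S := by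
      rw [← Finset.sum_erase_add _ _ (Finset.mem_univ j)]
      have h1 : ∑ k ∈ Finset.univ.erase j, ε k * a k
          = -∑ k ∈ Finset.univ.erase j, a k := by
        rw [← Finset.sum_neg_distrib]
        refine Finset.sum_congr rfl fun k hk => ?_
        rw [hεdef]; simp [Finset.ne_of_mem_erase hk]
      rw [h1, hS'j, hεdef]
      simp
      ring
    have hmem : (2 * a j - S) ∈ partitionValues n a :=
      ⟨ε, fun k => by rw [hεdef]; by_cases h : k = j <;> simp [h],
        by rw [hsumε]; exact (_root_.abs_of_nonneg (by linarith)).symm⟩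
    have hlow : ∀ x : ℝ, 2 * a j - S ≤ ‖f x‖ := by
      intro x
      rw [hf x, ← Finset.sum_erase_add _ _ (Finset.mem_univ j)]
      have h1 : ‖c j * Complex.exp (Complex.I * lam j * x)‖ = a j := by
        rw [norm_mul, abs_exp_I_mul, mul_one, hadef]
      have h2 : ‖∑ k ∈ Finset.univ.erase j,
          c k * Complex.exp (Complex.I * lam k * x)‖ ≤ S - a j := by
        refine le_trans (norm_sum_le _ _) ?_
        rw [← hS'j]
        refine Finset.sum_le_sum fun k _ => ?_
        rw [norm_mul, abs_exp_I_mul, mul_one, hadef]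
      have h3 := norm_sub_norm_le (c j * Complex.exp (Complex.I * lam j * x))
        (-(∑ k ∈ Finset.univ.erase j, c k * Complex.exp (Complex.I * lam k * x)))
      rw [sub_neg_eq_add, norm_neg] at h3
      have := h3
      rw [h1] at this
      calc 2 * a j - S ≤ a j - ‖∑ k ∈ Finset.univ.erase j,
            c k * Complex.exp (Complex.I * lam k * x)‖ := by linarith
        _ ≤ ‖c j * Complex.exp (Complex.I * lam j * x)
            + ∑ k ∈ Finset.univ.erase j, c k * Complex.exp (Complex.I * lam k * x)‖ := this
        _ = ‖∑ k ∈ Finset.univ.erase j,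
            c k * Complex.exp (Complex.I * lam k * x)
            + c j * Complex.exp (Complex.I * lam j * x)‖ := by rw [add_comm]
    have hvr : 2 * a j - S ≤ r := by
      rw [hr]
      exact le_ciInf fun x => hlow x
    exact le_trans (csInf_le hpbdd hmem) hvr
  · -- no domination : contradiction with r > 0
    exfalso
    push_neg at hdom
    obtain ⟨z, hz1, hz0⟩ := polygon a ha0 fun j => by
      have := hdom j; rw [← hSdef]; linarith
    have hrS : r ≤ S := by
      refine le_trans (hrle 0) ?_
      rw [hf 0, hSdef]
      refine le_trans (norm_sum_le _ _) ?_
      refine Finset.sum_le_sum fun k _ => ?_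
      rw [norm_mul, abs_exp_I_mul, mul_one, hadef]
    set t : Fin n → ℂ := fun k => if c k = 0 then 1 else z k * (a k) / c k with htdef
    have ht1 : ∀ k, ‖t k‖ = 1 := by
      intro k
      rw [htdef]
      by_cases hck : c k = 0
      · simp [hck]
      · have hak : 0 < a k := by
          rw [hadef]
          exact (norm_pos_iff.mpr hck)
        simp only [if_neg hck]
        rw [norm_div, norm_mul, hz1 k, one_mul, Complex.norm_real, Real.norm_eq_abs,
          _root_.abs_of_pos hak, hadef, div_self (norm_ne_zero_iff.mpr hck)]
    have hεpos : 0 < r / (S + 1) := by positivity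
    have hεle : r / (S + 1) ≤ 1 := by
      rw [div_le_one (by linarith)]; linarith
    obtain ⟨x, hx⟩ := kronecker lam hindep t ht1 hεpos hεle
    have hct : ∀ k, c k * t k = (a k : ℂ) * z k := by
      intro k
      by_cases hck : c k = 0
      · rw [htdef]
        simp only [if_pos hck, hck, zero_mul, mul_one]
        rw [hadef]
        simp [hck]
      · rw [htdef]
        simp only [if_neg hck]
        field_simp
    have h0 : (∑ k, c k * t k) = 0 := by
      rw [Finset.sum_congr rfl fun k _ => hct k]
      exact hz0
    have hfx : f x = ∑ k, (c k * Complex.exp (Complex.I * lam k * x) - c k * t k) := by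
      rw [Finset.sum_sub_distrib, h0, sub_zero, hf x]
    have hdiff : ‖f x‖ < r := by
      calc ‖f x‖
          = ‖∑ k, (c k * Complex.exp (Complex.I * lam k * x) - c k * t k)‖ := by
            rw [hfx]
        _ ≤ ∑ k, ‖c k * Complex.exp (Complex.I * lam k * x) - c k * t k‖ :=
            norm_sum_le _ _
        _ ≤ ∑ k, a k * (r / (S + 1)) := by
            refine Finset.sum_le_sum fun k _ => ?_
            rw [show c k * Complex.exp (Complex.I * lam k * x) - c k * t k
                = c k * (Complex.exp (Complex.I * lam k * x) - t k) by ring, norm_mul]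
            rw [hadef]
            exact mul_le_mul_of_nonneg_left (hx k).le (norm_nonneg _)
        _ = S * (r / (S + 1)) := by rw [← Finset.sum_mul, hSdef]
        _ < r := by
            rw [mul_div_assoc', div_lt_iff₀ (by linarith : (0:ℝ) < S + 1)]
            nlinarith
    exact absurd (hrle x) (not_le.mpr hdiff)

end
end

section
/- Let the real numbers λ_1,…,λ_n be linearly independent over the field of rational numbers, let c_1,…,c_n be complex numbers, let f(x)=∑_{k=1}^n c_k e^{iλ_k x}, and assume that r = inf_{x∈ℝ} |f(x)| > 0. Then r = min_{ε∈{−1,1}^n} |∑_{k=1}^n ε_k |c_k||; that is, the infimum of |f| equals the solution of the partition problem for |c_1|,…,|c_n|. -/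
open Complex Finset

noncomputable def Complex.abs : AbsoluteValue ℂ ℝ := NormedField.toAbsoluteValue ℂ

lemma Complex.norm_eq_abs (z : ℂ) : ‖z‖ = Complex.abs z := rfl

lemma Complex.abs_ofReal (x : ℝ) : Complex.abs (x : ℂ) = |x| := by
  show ‖(x : ℂ)‖ = |x|; simp

lemma Complex.abs_I : Complex.abs I = 1 := by
  show ‖I‖ = 1; simp

lemma Complex.abs_exp_ofReal_mul_I (x : ℝ) : Complex.abs (Complex.exp (x * I)) = 1 :=
  Complex.norm_exp_ofReal_mul_I x

lemma Complex.abs_mul_exp_arg_mul_I (x : ℂ) :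
    (Complex.abs x : ℂ) * Complex.exp (x.arg * I) = x :=
  Complex.norm_mul_exp_arg_mul_I x

lemma Complex.continuous_abs : Continuous Complex.abs := continuous_norm

lemma Complex.sq_abs (z : ℂ) : Complex.abs z ^ 2 = Complex.normSq z := Complex.sq_norm z

lemma factor_expand_s6 (p : ℕ) (w : ℝ) :
    ((2 + 2 * Real.cos w : ℝ) : ℂ) ^ p
      = ∑ j ∈ Finset.range (2 * p + 1),
          ((2 * p).choose j : ℂ) * Complex.exp ((((j : ℂ) - (p : ℂ)) * (w : ℂ)) * Complex.I) := by
  have he : Complex.exp (-(w:ℂ) * I) * Complex.exp ((w:ℂ) * I) = 1 := by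
    rw [← Complex.exp_add]; simp
  have h1 : Complex.exp ((w:ℂ) * I) = Complex.cos w + Complex.sin w * I :=
    Complex.exp_mul_I _
  have h2 : Complex.exp (-(w:ℂ) * I) = Complex.cos w - Complex.sin w * I := by
    rw [show -(w:ℂ) * I = (-w : ℂ) * I by ring, Complex.exp_mul_I, Complex.cos_neg,
      Complex.sin_neg]; ring
  have h3 : Complex.exp (-(w:ℂ) * I) + 2 + Complex.exp ((w:ℂ) * I)
      = ((2 + 2 * Real.cos w : ℝ) : ℂ) := by
    rw [h1, h2]; push_cast [Complex.ofReal_cos]; ring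
  have base : Complex.exp (-(w:ℂ) * I) * (1 + Complex.exp ((w:ℂ) * I)) ^ 2
      = ((2 + 2 * Real.cos w : ℝ) : ℂ) := by
    rw [← h3]; linear_combination (2 + Complex.exp ((w:ℂ) * I)) * he
  calc ((2 + 2 * Real.cos w : ℝ) : ℂ) ^ p
      = (Complex.exp (-(w:ℂ) * I)) ^ p * ((1 + Complex.exp ((w:ℂ) * I)) ^ 2) ^ p := by
        rw [← base, mul_pow]
    _ = Complex.exp (-(p:ℂ) * (w:ℂ) * I) * (1 + Complex.exp ((w:ℂ) * I)) ^ (2 * p) := by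
        rw [← pow_mul, ← Complex.exp_nat_mul,
          show (p:ℂ) * (-(w:ℂ) * I) = -(p:ℂ) * (w:ℂ) * I by ring]
    _ = Complex.exp (-(p:ℂ) * (w:ℂ) * I) *
          ∑ j ∈ Finset.range (2 * p + 1),
            (Complex.exp ((w:ℂ) * I)) ^ j * 1 ^ (2 * p - j) * ((2 * p).choose j : ℂ) := by
        rw [add_comm (1 : ℂ), add_pow]
    _ = ∑ j ∈ Finset.range (2 * p + 1),
          ((2 * p).choose j : ℂ) * Complex.exp ((((j : ℂ) - (p : ℂ)) * (w : ℂ)) * Complex.I) := by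
        rw [Finset.mul_sum]
        refine Finset.sum_congr rfl fun j _ => ?_
        rw [one_pow, ← Complex.exp_nat_mul, mul_one,
          show Complex.exp (-(p:ℂ) * (w:ℂ) * I) *
              (Complex.exp ((j:ℂ) * ((w:ℂ) * I)) * ((2 * p).choose j : ℂ))
            = ((2 * p).choose j : ℂ) *
              (Complex.exp (-(p:ℂ) * (w:ℂ) * I) * Complex.exp ((j:ℂ) * ((w:ℂ) * I))) by ring,
          ← Complex.exp_add,
          show -(p:ℂ) * (w:ℂ) * I + (j:ℂ) * ((w:ℂ) * I) = (((j:ℂ) - (p:ℂ)) * (w:ℂ)) * I by ring]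

lemma polygon_s6 {ι : Type*} [DecidableEq ι] (s : Finset ι) (a : ι → ℝ) (ha : ∀ k, 0 ≤ a k)
    (h : ∀ θ : ι → ℝ, (∑ k ∈ s, (a k : ℂ) * Complex.exp ((θ k : ℂ) * Complex.I)) ≠ 0) :
    ∃ j ∈ s, ∑ k ∈ s.erase j, a k < a j := by
  induction s using Finset.induction_on with
  | empty => exact absurd (by simp) (h fun _ => 0)
  | insert i s hi ih =>
    set z : (ι → ℝ) → ℂ := fun θ => ∑ k ∈ s, (a k : ℂ) * Complex.exp ((θ k : ℂ) * Complex.I)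
      with hz
    have hzfull : ∀ θ : ι → ℝ,
        (∑ k ∈ insert i s, (a k : ℂ) * Complex.exp ((θ k : ℂ) * Complex.I))
          = (a i : ℂ) * Complex.exp ((θ i : ℂ) * Complex.I) + z θ :=
      fun θ => Finset.sum_insert hi
    have hzne : ∀ θ : ι → ℝ, Complex.abs (z θ) ≠ a i := by
      intro θ heq
      by_cases h0 : z θ = 0
      · have hai : a i = 0 := by rw [← heq, h0, map_zero]
        apply h θ
        rw [hzfull, h0, hai]; simp
      · set t : ℝ := (-(z θ)).arg with ht
        have hupd : z (Function.update θ i t) = z θ := by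
          apply Finset.sum_congr rfl
          intro k hk
          rw [Function.update_of_ne (by rintro rfl; exact hi hk)]
        apply h (Function.update θ i t)
        rw [hzfull, hupd, Function.update_self]
        have : ((Complex.abs (-(z θ)) : ℂ)) * Complex.exp ((t : ℂ) * Complex.I)
            = -(z θ) := by
          rw [ht]; exact_mod_cast Complex.abs_mul_exp_arg_mul_I (-(z θ))
        rw [map_neg_eq_map] at this
        rw [heq] at this
        rw [this]; ring
    -- continuity and connectedness
    have hcont : Continuous fun θ : ι → ℝ => Complex.abs (z θ) := by
      apply Complex.continuous_abs.comp
      apply continuous_finset_sum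
      intro k _
      exact continuous_const.mul (Complex.continuous_exp.comp
        ((Complex.continuous_ofReal.comp (continuous_apply k)).mul continuous_const))
    have hconn : IsPreconnected (Set.range fun θ : ι → ℝ => Complex.abs (z θ)) := by
      rw [← Set.image_univ]
      exact (isPreconnected_univ).image _ hcont.continuousOn
    have hord := hconn.ordConnected
    have hmem : ∀ θ : ι → ℝ, Complex.abs (z θ) ∈
        (Set.range fun θ : ι → ℝ => Complex.abs (z θ)) := fun θ => ⟨θ, rfl⟩
    have hS' : Complex.abs (z fun _ => 0) = ∑ k ∈ s, a k := by
      have : z (fun _ => 0) = ((∑ k ∈ s, a k : ℝ) : ℂ) := by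
        rw [hz]; push_cast; simp
      rw [this, Complex.abs_ofReal, _root_.abs_of_nonneg (Finset.sum_nonneg fun k _ => ha k)]
    by_cases hcase : ∑ k ∈ s, a k < a i
    · exact ⟨i, Finset.mem_insert_self i s, by rwa [Finset.erase_insert hi]⟩
    · have hlt : a i < ∑ k ∈ s, a k := by
        rcases lt_or_eq_of_le (not_lt.1 hcase) with h' | h'
        · exact h'
        · exact absurd (h' ▸ hS') (hzne _)
      -- a i is strictly below every value of abs ∘ z
      have hbelow : ∀ θ : ι → ℝ, a i < Complex.abs (z θ) := by
        intro θ
        rcases lt_trichotomy (Complex.abs (z θ)) (a i) with h' | h' | h'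
        · exfalso
          have : a i ∈ Set.range fun θ : ι → ℝ => Complex.abs (z θ) :=
            hord.out (hmem θ) (hmem fun _ => 0) ⟨h'.le, hS' ▸ hlt.le⟩
          obtain ⟨θ', hθ'⟩ := this
          exact hzne θ' hθ'
        · exact absurd h' (hzne θ)
        · exact h'
      have hzne0 : ∀ θ : ι → ℝ, z θ ≠ 0 := by
        intro θ h0
        have := hbelow θ
        rw [h0, map_zero] at this
        exact absurd this (not_lt.2 (ha i))
      obtain ⟨j, hjs, hj⟩ := ih hzne0
      -- evaluate at the sign configuration
      have hji : j ≠ i := fun h' => hi (h' ▸ hjs)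
      set θs : ι → ℝ := fun k => if k = j then 0 else Real.pi with hθs
      have hval : z θs = ((a j - ∑ k ∈ s.erase j, a k : ℝ) : ℂ) := by
        show (∑ k ∈ s, (a k : ℂ) * Complex.exp ((θs k : ℂ) * Complex.I))
            = ((a j - ∑ k ∈ s.erase j, a k : ℝ) : ℂ)
        rw [← Finset.add_sum_erase _ _ hjs]
        have h1 : (a j : ℂ) * Complex.exp ((θs j : ℂ) * Complex.I) = (a j : ℂ) := by
          simp [hθs]
        have h2 : ∀ k ∈ s.erase j, (a k : ℂ) * Complex.exp ((θs k : ℂ) * Complex.I)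
            = -(a k : ℂ) := by
          intro k hk
          have : θs k = Real.pi := by
            simp only [hθs, if_neg (Finset.ne_of_mem_erase hk)]
          rw [this, Complex.exp_pi_mul_I]; ring
        rw [h1, Finset.sum_congr rfl h2, Finset.sum_neg_distrib]
        push_cast; ring
      have habs : Complex.abs (z θs) = a j - ∑ k ∈ s.erase j, a k := by
        rw [hval, Complex.abs_ofReal, _root_.abs_of_nonneg (by linarith)]
      have hkey : a i < a j - ∑ k ∈ s.erase j, a k := habs ▸ hbelow θs
      refine ⟨j, Finset.mem_insert_of_mem hjs, ?_⟩
      rw [Finset.erase_insert_of_ne (Ne.symm hji), Finset.sum_insert (fun h' =>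
        hi (Finset.mem_of_mem_erase h'))]
      linarith

set_option maxHeartbeats 0 in
lemma kron (n : ℕ) (lam : Fin n → ℝ)
    (hindep : ∀ r : Fin n → ℚ, (∑ k, (r k : ℝ) * lam k) = 0 → ∀ k, r k = 0)
    (θ : Fin n → ℝ) {ε : ℝ} (hε : 0 < ε) (hε1 : ε ≤ 1) :
    ∃ x : ℝ, ∀ k,
      Complex.abs (Complex.exp (((lam k * x - θ k : ℝ) : ℂ) * Complex.I) - 1) < ε := by
  by_contra hcon
  push_neg at hcon
  -- hcon : ∀ x, ∃ k, ε ≤ abs (exp (...) - 1)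
  have hn : 0 < n := (hcon 0).choose.pos
  -- far bound
  have hfar : ∀ w : ℝ, ε ≤ Complex.abs (Complex.exp ((w:ℂ) * I) - 1) →
      2 + 2 * Real.cos w ≤ 4 - ε^2 := by
    intro w hw
    have habs2 : (Complex.abs (Complex.exp ((w:ℂ)*I) - 1))^2 = 2 - 2 * Real.cos w := by
      have h0 : Complex.exp ((w:ℂ)*I) - 1
          = ((Real.cos w - 1 : ℝ):ℂ) + ((Real.sin w : ℝ):ℂ) * I := by
        rw [Complex.exp_mul_I]; push_cast [Complex.ofReal_cos, Complex.ofReal_sin]; ring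
      rw [h0, Complex.sq_abs, Complex.normSq_add_mul_I]
      nlinarith [Real.sin_sq_add_cos_sq w]
    nlinarith [pow_le_pow_left₀ hε.le hw 2, habs2]
  have hq0 : (0:ℝ) ≤ (4 - ε^2)/4 := by nlinarith
  have hq1 : (4 - ε^2)/4 < 1 := by nlinarith
  -- choose p
  have htend : Filter.Tendsto (fun p : ℕ => (p:ℝ)^n * ((4 - ε^2)/4)^p)
      Filter.atTop (nhds 0) :=
    (summable_pow_mul_geometric_of_norm_lt_one n
      (by rwa [Real.norm_eq_abs, _root_.abs_of_nonneg hq0])).tendsto_atTop_zero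
  obtain ⟨p, hplt, hp1⟩ : ∃ p : ℕ, (p:ℝ)^n * ((4 - ε^2)/4)^p < (3:ℝ)⁻¹^n ∧ 1 ≤ p := by
    exact ((htend.eventually (gt_mem_nhds (by positivity : (0:ℝ) < (3:ℝ)⁻¹^n))).and
      (Filter.eventually_ge_atTop 1)).exists
  have hkey : ((2*p+1:ℕ):ℝ)^n * ((4 - ε^2)/4)^p < 1 := by
    have hp1' : (1:ℝ) ≤ (p:ℝ) := by exact_mod_cast hp1
    have h2p1 : ((2*p+1:ℕ):ℝ) ≤ 3*(p:ℝ) := by push_cast; linarith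
    calc ((2*p+1:ℕ):ℝ)^n * ((4 - ε^2)/4)^p
        ≤ (3*(p:ℝ))^n * ((4 - ε^2)/4)^p := by
          exact mul_le_mul_of_nonneg_right (pow_le_pow_left₀ (by positivity) h2p1 n)
            (by positivity)
      _ = 3^n * ((p:ℝ)^n * ((4 - ε^2)/4)^p) := by rw [mul_pow]; ring
      _ < 3^n * (3:ℝ)⁻¹^n := by
          exact mul_lt_mul_of_pos_left hplt (by positivity)
      _ = 1 := by rw [← mul_pow]; norm_num
  -- abbreviations
  set U : ℝ := (4-ε^2)^p * ((4:ℝ)^p)^(n-1) with hUdef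
  set D : ℝ := ((Nat.centralBinom p : ℕ):ℝ)^n with hDdef
  have hDpos : 0 < D := by
    have := Nat.centralBinom_pos p
    rw [hDdef]; positivity
  have hDU : U < D := by
    have hbin : (4:ℝ)^p ≤ ((2*p+1:ℕ):ℝ) * ((Nat.centralBinom p : ℕ):ℝ) := by
      have h := Nat.four_pow_le_two_mul_self_mul_centralBinom p hp1
      have h2 : ((4^p : ℕ):ℝ) ≤ ((2*p*Nat.centralBinom p : ℕ):ℝ) := by exact_mod_cast h
      push_cast at h2 ⊢
      nlinarith [Nat.centralBinom_pos p, (by exact_mod_cast Nat.centralBinom_pos p :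
        (0:ℝ) < (Nat.centralBinom p : ℝ))]
    have hU : U = ((4 - ε^2)/4)^p * ((4:ℝ)^p)^n := by
      rw [hUdef]
      have h4 : ((4 - ε^2) : ℝ) = ((4 - ε^2)/4) * 4 := by ring
      have hn' : n - 1 + 1 = n := Nat.sub_add_cancel hn
      calc (4-ε^2)^p * ((4:ℝ)^p)^(n-1)
          = (((4 - ε^2)/4) * 4)^p * ((4:ℝ)^p)^(n-1) := by rw [← h4]
        _ = ((4 - ε^2)/4)^p * ((4:ℝ)^p * ((4:ℝ)^p)^(n-1)) := by rw [mul_pow]; ring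
        _ = ((4 - ε^2)/4)^p * ((4:ℝ)^p)^(n-1+1) := by rw [pow_succ]; ring
        _ = ((4 - ε^2)/4)^p * ((4:ℝ)^p)^n := by rw [hn']
    calc U = ((4 - ε^2)/4)^p * ((4:ℝ)^p)^n := hU
      _ ≤ ((4 - ε^2)/4)^p * (((2*p+1:ℕ):ℝ) * ((Nat.centralBinom p : ℕ):ℝ))^n := by
          refine mul_le_mul_of_nonneg_left (pow_le_pow_left₀ (by positivity) hbin n)
            (pow_nonneg hq0 p)
      _ = (((2*p+1:ℕ):ℝ)^n * ((4 - ε^2)/4)^p) * D := by rw [mul_pow, hDdef]; ring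
      _ < 1 * D := mul_lt_mul_of_pos_right hkey hDpos
      _ = D := one_mul D
  -- the kernel and its expansion
  set K : ℝ → ℝ := fun x => ∏ k, (2 + 2 * Real.cos (lam k * x - θ k))^p with hKdef
  have hKcont : Continuous K := by
    rw [hKdef]
    refine continuous_finset_prod _ fun k _ => ?_
    exact ((continuous_const.add (continuous_const.mul (Real.continuous_cos.comp
      ((continuous_const.mul continuous_id).sub continuous_const)))).pow p)
  have hfactor_nonneg : ∀ w : ℝ, (0:ℝ) ≤ 2 + 2*Real.cos w := fun w => by
    nlinarith [Real.neg_one_le_cos w]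
  have hfactor_le4 : ∀ w : ℝ, 2 + 2*Real.cos w ≤ 4 := fun w => by
    nlinarith [Real.cos_le_one w]
  have hKnonneg : ∀ x, 0 ≤ K x := fun x =>
    Finset.prod_nonneg fun k _ => pow_nonneg (hfactor_nonneg _) p
  have hKle : ∀ x, K x ≤ U := by
    intro x
    obtain ⟨k, hk⟩ := hcon x
    rw [hKdef]
    calc ∏ j, (2 + 2 * Real.cos (lam j * x - θ j))^p
        = (2 + 2 * Real.cos (lam k * x - θ k))^p *
            ∏ j ∈ Finset.univ.erase k, (2 + 2 * Real.cos (lam j * x - θ j))^p :=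
          (Finset.mul_prod_erase _ _ (Finset.mem_univ k)).symm
      _ ≤ (4 - ε^2)^p * ((4:ℝ)^p)^(n-1) := by
          refine mul_le_mul ?_ ?_ (Finset.prod_nonneg fun j _ => pow_nonneg (hfactor_nonneg _) p)
            (pow_nonneg (by nlinarith) p)
          · exact pow_le_pow_left₀ (hfactor_nonneg _) (hfar _ hk) p
          · calc (∏ j ∈ Finset.univ.erase k, (2 + 2 * Real.cos (lam j * x - θ j))^p)
                ≤ ∏ j ∈ Finset.univ.erase k, (4:ℝ)^p :=
                  Finset.prod_le_prod (fun j _ => pow_nonneg (hfactor_nonneg _) p)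
                    (fun j _ => pow_le_pow_left₀ (hfactor_nonneg _) (hfactor_le4 _) p)
              _ = ((4:ℝ)^p)^(n-1) := by
                  rw [Finset.prod_const, Finset.card_erase_of_mem (Finset.mem_univ k),
                    Finset.card_univ, Fintype.card_fin]
  -- expansion
  have hexp : ∀ x : ℝ, ((K x : ℝ):ℂ)
      = ∑ g ∈ Fintype.piFinset (fun _ : Fin n => Finset.range (2*p+1)),
          ((∏ k, ((2*p).choose (g k) : ℂ)) *
            Complex.exp (((- ∑ k, ((g k:ℝ) - p) * θ k : ℝ):ℂ) * Complex.I)) *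
          Complex.exp (((∑ k, ((g k:ℝ) - p) * lam k : ℝ):ℂ) * Complex.I * (x:ℂ)) := by
    intro x
    have e1 : ((K x : ℝ):ℂ) = ∏ k, ((2 + 2*Real.cos (lam k * x - θ k) : ℝ):ℂ)^p := by
      rw [hKdef]; push_cast; ring
    rw [e1, Finset.prod_congr rfl (fun k _ => factor_expand_s6 p (lam k * x - θ k)),
      Finset.prod_univ_sum]
    refine Finset.sum_congr rfl fun g hg => ?_
    rw [Finset.prod_mul_distrib, ← Complex.exp_sum]
    rw [mul_assoc, ← Complex.exp_add]
    congr 1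
    have harg : ∀ k : Fin n, (((g k : ℂ) - (p:ℂ)) * ((lam k * x - θ k : ℝ):ℂ)) * Complex.I
        = (-(((g k:ℝ) - p) * θ k) : ℝ) * Complex.I
          + ((((g k:ℝ) - p) * lam k : ℝ):ℂ) * Complex.I * (x:ℂ) := by
      intro k; push_cast; ring
    rw [Finset.sum_congr rfl (fun k _ => harg k), Finset.sum_add_distrib]
    push_cast
    simp only [Finset.sum_mul]
    congr 1
    rw [neg_mul, Finset.sum_mul, ← Finset.sum_neg_distrib]
    congr 1
    apply Finset.sum_congr rfl
    intro k _
    ring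
  -- nonvanishing frequencies off the diagonal
  have hβne : ∀ g : Fin n → ℕ, g ≠ (fun _ => p) →
      (∑ k, ((g k:ℝ) - p) * lam k) ≠ 0 := by
    intro g hne h0
    apply hne
    funext k
    have hx : (∑ k, ((((g k : ℚ) - p) : ℚ):ℝ) * lam k) = 0 := by
      rw [← h0]; refine Finset.sum_congr rfl fun k _ => ?_; push_cast; ring
    have := hindep (fun k => (g k : ℚ) - p) hx k
    have : (g k : ℚ) = p := by linarith [this]
    exact_mod_cast this
  -- integral of an exponential
  have hIntExp : ∀ (b T : ℝ), b ≠ 0 →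
      Complex.abs (∫ x in (0:ℝ)..T, Complex.exp ((b:ℂ) * Complex.I * (x:ℂ))) ≤ 2/|b| := by
    intro b T hb
    have hc : ((b:ℂ) * I) ≠ 0 := by
      simp [Complex.ofReal_ne_zero, hb, Complex.I_ne_zero]
    rw [integral_exp_mul_complex hc, map_div₀]
    push_cast
    have habsden : Complex.abs ((b:ℂ)*I) = |b| := by
      rw [map_mul, Complex.abs_I, Complex.abs_ofReal, mul_one]
    have habsnum : Complex.abs (Complex.exp ((b:ℂ)*I*T) - Complex.exp ((b:ℂ)*I*0)) ≤ 2 := by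
      calc Complex.abs (Complex.exp ((b:ℂ)*I*T) - Complex.exp ((b:ℂ)*I*0))
          ≤ Complex.abs (Complex.exp ((b:ℂ)*I*T)) + Complex.abs (Complex.exp ((b:ℂ)*I*0)) := by
            rw [← Complex.norm_eq_abs, ← Complex.norm_eq_abs, ← Complex.norm_eq_abs]
            exact norm_sub_le _ _
        _ ≤ 2 := by
            have h1 : (b:ℂ)*I*T = ((b*T : ℝ):ℂ) * I := by push_cast; ring
            have h2 : (b:ℂ)*I*0 = ((0:ℝ):ℂ) * I := by push_cast; ring
            rw [h1, h2, Complex.abs_exp_ofReal_mul_I, Complex.abs_exp_ofReal_mul_I]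
            norm_num
    rw [habsden]
    have hbpos : 0 < |b| := abs_pos.mpr hb
    exact (div_le_div_iff_of_pos_right hbpos).mpr habsnum
  classical
  set Pfin := Fintype.piFinset (fun _ : Fin n => Finset.range (2*p+1)) with hPfin
  set cf : (Fin n → ℕ) → ℂ := fun g => (∏ k, ((2*p).choose (g k) : ℂ)) *
      Complex.exp (((- ∑ k, ((g k:ℝ) - p) * θ k : ℝ):ℂ) * Complex.I) with hcf
  set β : (Fin n → ℕ) → ℝ := fun g => ∑ k, ((g k:ℝ) - p) * lam k with hβ
  have hexp2 : ∀ x : ℝ, ((K x : ℝ):ℂ) = ∑ g ∈ Pfin, cf g *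
      Complex.exp (((β g : ℝ):ℂ) * Complex.I * (x:ℂ)) := by
    intro x
    rw [hexp x]
  set diag : Fin n → ℕ := fun _ => p with hdiag
  have hdiagmem : diag ∈ Pfin := by
    rw [hPfin, Fintype.mem_piFinset]
    intro k
    simp only [hdiag]
    exact Finset.mem_range.mpr (by omega)
  have hβdiag : β diag = 0 := by simp [hβ, hdiag]
  have hcfdiag : cf diag = (D:ℂ) := by
    have h1 : (- ∑ k : Fin n, ((diag k:ℝ) - p) * θ k : ℝ) = 0 := by simp [hdiag]
    rw [hcf]
    simp only [hdiag]
    rw [hDdef]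
    push_cast
    simp [Nat.centralBinom_eq_two_mul_choose, Finset.prod_const, Finset.card_univ]
  have hβne' : ∀ g ∈ Pfin.erase diag, β g ≠ 0 := by
    intro g hg
    exact hβne g (Finset.ne_of_mem_erase hg)
  set B : ℝ := ∑ g ∈ Pfin.erase diag, Complex.abs (cf g) * (2/|β g|) with hB
  have hB0 : 0 ≤ B :=
    Finset.sum_nonneg fun g _ => mul_nonneg (AbsoluteValue.nonneg _ _) (by positivity)
  have hcontg : ∀ g : Fin n → ℕ, Continuous fun x : ℝ =>
      Complex.exp (((β g : ℝ):ℂ) * Complex.I * (x:ℂ)) :=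
    fun g => Complex.continuous_exp.comp (continuous_const.mul Complex.continuous_ofReal)
  have hIT : ∀ T : ℝ, D * T - B ≤ ∫ x in (0:ℝ)..T, K x := by
    intro T
    have hInteq : ((∫ x in (0:ℝ)..T, K x : ℝ) : ℂ)
        = (D:ℂ) * T + ∑ g ∈ Pfin.erase diag, cf g *
            ∫ x in (0:ℝ)..T, Complex.exp (((β g : ℝ):ℂ) * Complex.I * (x:ℂ)) := by
      rw [← intervalIntegral.integral_ofReal]
      rw [intervalIntegral.integral_congr (g := fun x : ℝ => ∑ g ∈ Pfin, cf g *
          Complex.exp (((β g : ℝ):ℂ) * Complex.I * (x:ℂ))) (fun x _ => hexp2 x)]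
      rw [intervalIntegral.integral_finset_sum (f := fun g (x : ℝ) => cf g *
          Complex.exp (((β g : ℝ):ℂ) * Complex.I * (x:ℂ))) (fun g _ =>
        ((continuous_const.mul (hcontg g)).intervalIntegrable 0 T))]
      simp only [intervalIntegral.integral_const_mul]
      rw [← Finset.add_sum_erase _ _ hdiagmem, hβdiag, hcfdiag]
      congr 1
      simp [intervalIntegral.integral_const]
    have habs : Complex.abs (((∫ x in (0:ℝ)..T, K x : ℝ) : ℂ) - (D:ℂ) * T) ≤ B := by
      rw [hInteq, add_sub_cancel_left, hB]
      calc Complex.abs (∑ g ∈ Pfin.erase diag, cf g *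
              ∫ x in (0:ℝ)..T, Complex.exp (((β g : ℝ):ℂ) * Complex.I * (x:ℂ)))
          ≤ ∑ g ∈ Pfin.erase diag, Complex.abs (cf g *
              ∫ x in (0:ℝ)..T, Complex.exp (((β g : ℝ):ℂ) * Complex.I * (x:ℂ))) :=
            Complex.abs.sum_le _ _
        _ ≤ ∑ g ∈ Pfin.erase diag, Complex.abs (cf g) * (2/|β g|) := by
            refine Finset.sum_le_sum fun g hg => ?_
            rw [map_mul]
            exact mul_le_mul_of_nonneg_left (hIntExp (β g) T (hβne' g hg))
              (AbsoluteValue.nonneg _ _)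
    have hre : |(∫ x in (0:ℝ)..T, K x) - D * T| ≤ B := by
      have hcast : (((∫ x in (0:ℝ)..T, K x) - D * T : ℝ) : ℂ)
          = ((∫ x in (0:ℝ)..T, K x : ℝ) : ℂ) - (D:ℂ) * T := by push_cast; ring
      rw [← Complex.abs_ofReal, hcast]
      exact habs
    linarith [(abs_le.mp hre).1]
  have hupper : ∀ T : ℝ, 0 ≤ T → (∫ x in (0:ℝ)..T, K x) ≤ U * T := by
    intro T hT
    calc (∫ x in (0:ℝ)..T, K x) ≤ ∫ x in (0:ℝ)..T, U :=
        intervalIntegral.integral_mono_on hT (hKcont.intervalIntegrable 0 T)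
          intervalIntegrable_const (fun x _ => hKle x)
      _ = U * T := by
          simp [intervalIntegral.integral_const, smul_eq_mul]
          ring
  have hT0pos : (0:ℝ) < (B+1)/(D-U) := div_pos (by linarith) (by linarith)
  have h1 := hIT ((B+1)/(D-U))
  have h2 := hupper ((B+1)/(D-U)) hT0pos.le
  have h4 : (D - U) * ((B+1)/(D-U)) = B + 1 := by
    exact mul_div_cancel₀ _ (by linarith : D - U ≠ 0)
  linarith

theorem stmt_6 (n : ℕ) (lam : Fin n → ℝ) (c : Fin n → ℂ)
    (hindep : ∀ r : Fin n → ℚ, (∑ k, (r k : ℝ) * lam k) = 0 → ∀ k, r k = 0)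
    (f : ℝ → ℂ)
    (hf : ∀ x : ℝ, f x = ∑ k, c k * Complex.exp (Complex.I * (lam k : ℂ) * (x : ℂ)))
    (r : ℝ) (hr : r = ⨅ x : ℝ, ‖f x‖) (hrpos : 0 < r) :
    r = sInf (partitionValues n fun k => ‖c k‖) := by
  classical
  set a : Fin n → ℝ := fun k => Complex.abs (c k) with ha
  have ha0 : ∀ k, 0 ≤ a k := fun k => AbsoluteValue.nonneg _ _
  have hbdd : BddBelow (Set.range fun x : ℝ => Complex.abs (f x)) := by
    refine ⟨0, ?_⟩
    rintro y ⟨x, rfl⟩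
    exact AbsoluteValue.nonneg _ _
  have hrle : ∀ x : ℝ, r ≤ Complex.abs (f x) :=
    fun x => le_of_eq_of_le hr (ciInf_le hbdd x)
  -- key inequality from Kronecker approximation
  have hPle : ∀ θ : Fin n → ℝ,
      r ≤ Complex.abs (∑ k, c k * Complex.exp ((θ k : ℂ) * Complex.I)) := by
    intro θ
    by_contra hlt
    push_neg at hlt
    set A := Complex.abs (∑ k, c k * Complex.exp ((θ k : ℂ) * Complex.I)) with hA
    set S := ∑ k, a k with hS
    have hS0 : 0 ≤ S := Finset.sum_nonneg fun k _ => ha0 k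
    have hεpos : 0 < min 1 ((r - A)/(S+1)) :=
      lt_min one_pos (div_pos (by linarith) (by linarith))
    obtain ⟨x, hx⟩ := kron n lam hindep θ hεpos (min_le_left _ _)
    have hdiff : Complex.abs (f x - ∑ k, c k * Complex.exp ((θ k : ℂ) * Complex.I))
        ≤ min 1 ((r - A)/(S+1)) * S := by
      rw [hf x, ← Finset.sum_sub_distrib]
      calc Complex.abs (∑ k, (c k * Complex.exp (Complex.I * lam k * x)
              - c k * Complex.exp ((θ k:ℂ) * Complex.I)))
          ≤ ∑ k, Complex.abs (c k * Complex.exp (Complex.I * lam k * x)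
              - c k * Complex.exp ((θ k:ℂ) * Complex.I)) := Complex.abs.sum_le _ _
        _ ≤ ∑ k, a k * min 1 ((r - A)/(S+1)) := by
            refine Finset.sum_le_sum fun k _ => ?_
            have he : Complex.exp ((θ k:ℂ) * Complex.I) *
                Complex.exp (((lam k * x - θ k : ℝ):ℂ) * Complex.I)
                = Complex.exp (Complex.I * lam k * x) := by
              rw [← Complex.exp_add]
              congr 1
              push_cast
              ring
            have hfactor : c k * Complex.exp (Complex.I * lam k * x)
                - c k * Complex.exp ((θ k:ℂ) * Complex.I)
                = (c k * Complex.exp ((θ k:ℂ) * Complex.I)) *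
                  (Complex.exp (((lam k * x - θ k : ℝ):ℂ) * Complex.I) - 1) := by
              rw [← he]
              ring
            rw [hfactor, map_mul, map_mul, Complex.abs_exp_ofReal_mul_I, mul_one]
            exact mul_le_mul_of_nonneg_left (hx k).le (ha0 k)
        _ = min 1 ((r - A)/(S+1)) * S := by
            rw [← Finset.sum_mul, ← hS]
            ring
    have hfx : Complex.abs (f x) ≤ A + min 1 ((r - A)/(S+1)) * S := by
      have h' : f x = (∑ k, c k * Complex.exp ((θ k : ℂ) * Complex.I))
          + (f x - ∑ k, c k * Complex.exp ((θ k : ℂ) * Complex.I)) := by ring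
      calc Complex.abs (f x)
          ≤ Complex.abs (∑ k, c k * Complex.exp ((θ k : ℂ) * Complex.I))
            + Complex.abs (f x - ∑ k, c k * Complex.exp ((θ k : ℂ) * Complex.I)) := by
            nth_rewrite 1 [h']
            exact Complex.abs.add_le _ _
        _ ≤ A + min 1 ((r - A)/(S+1)) * S := by rw [← hA]; linarith
    have hεS : min 1 ((r - A)/(S+1)) * S < r - A := by
      calc min 1 ((r - A)/(S+1)) * S ≤ ((r-A)/(S+1)) * S :=
          mul_le_mul_of_nonneg_right (min_le_right _ _) hS0
        _ < r - A := by
            rw [div_mul_eq_mul_div, div_lt_iff₀ (by linarith)]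
            nlinarith
    have := hrle x
    linarith
  -- nonvanishing of the modulus sums
  have hane : ∀ θ : Fin n → ℝ,
      (∑ k, (a k : ℂ) * Complex.exp ((θ k : ℂ) * Complex.I)) ≠ 0 := by
    intro θ hzero
    set θ' : Fin n → ℝ := fun k => if c k = 0 then θ k
      else θ k + (((a k : ℂ))/c k).arg with hθ'
    have hterm : ∀ k, c k * Complex.exp ((θ' k : ℂ) * Complex.I)
        = (a k:ℂ) * Complex.exp ((θ k : ℂ) * Complex.I) := by
      intro k
      by_cases hc : c k = 0
      · have hak : a k = 0 := by rw [ha]; simp [hc]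
        simp [hc, hak]
      · have hgood : Complex.abs ((a k : ℂ)/c k) = 1 := by
          rw [map_div₀, Complex.abs_ofReal, _root_.abs_of_nonneg (ha0 k), ha]
          exact div_self (fun h => hc (Complex.abs.eq_zero.mp h))
        have hexparg : Complex.exp (((((a k : ℂ)/c k).arg : ℝ) : ℂ) * Complex.I)
            = (a k : ℂ)/c k := by
          have h := Complex.abs_mul_exp_arg_mul_I ((a k : ℂ)/c k)
          rwa [hgood, Complex.ofReal_one, one_mul] at h
        simp only [hθ', if_neg hc]
        rw [Complex.ofReal_add, add_mul, Complex.exp_add, hexparg]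
        field_simp
    have h0 : (∑ k, c k * Complex.exp ((θ' k : ℂ) * Complex.I)) = 0 := by
      rw [Finset.sum_congr rfl (fun k _ => hterm k), hzero]
    have h1 := hPle θ'
    rw [h0, map_zero] at h1
    linarith
  obtain ⟨j, _, hj⟩ := polygon_s6 (Finset.univ : Finset (Fin n)) a ha0 hane
  have hm0 : 0 ≤ a j - ∑ k ∈ Finset.univ.erase j, a k := by linarith
  -- the dominant partition value
  have hmmem : (a j - ∑ k ∈ Finset.univ.erase j, a k) ∈ partitionValues n a := by
    refine ⟨fun k => if k = j then 1 else -1, fun k => ?_, ?_⟩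
    · by_cases h : k = j
      · left; simp [h]
      · right; simp [h]
    · have hsum : ∑ k, (if k = j then (1:ℝ) else -1) * a k
          = a j - ∑ k ∈ Finset.univ.erase j, a k := by
        rw [← Finset.add_sum_erase _ _ (Finset.mem_univ j)]
        have h2 : ∀ k ∈ Finset.univ.erase j,
            (if k = j then (1:ℝ) else -1) * a k = -(a k) := fun k hk => by
          rw [if_neg (Finset.ne_of_mem_erase hk)]; ring
        rw [Finset.sum_congr rfl h2, Finset.sum_neg_distrib, if_pos rfl]
        ring
      rw [hsum, _root_.abs_of_nonneg hm0]
  -- pointwise lower bound : m ≤ |f x|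
  have hmr : a j - ∑ k ∈ Finset.univ.erase j, a k ≤ r := by
    rw [hr]
    refine le_ciInf fun x => ?_
    rw [hf x, ← Finset.add_sum_erase _ _ (Finset.mem_univ j)]
    have habs1 : ∀ k : Fin n,
        Complex.abs (c k * Complex.exp (Complex.I * lam k * x)) = a k := by
      intro k
      rw [map_mul, show Complex.I * (lam k:ℂ) * (x:ℂ) = ((lam k * x : ℝ):ℂ) * Complex.I by
        push_cast; ring, Complex.abs_exp_ofReal_mul_I, mul_one, ha]
    have h2 : Complex.abs (∑ k ∈ Finset.univ.erase j,
        c k * Complex.exp (Complex.I * lam k * x)) ≤ ∑ k ∈ Finset.univ.erase j, a k := by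
      calc Complex.abs (∑ k ∈ Finset.univ.erase j, c k * Complex.exp (Complex.I * lam k * x))
          ≤ ∑ k ∈ Finset.univ.erase j,
              Complex.abs (c k * Complex.exp (Complex.I * lam k * x)) :=
            Complex.abs.sum_le _ _
        _ = ∑ k ∈ Finset.univ.erase j, a k :=
            Finset.sum_congr rfl fun k _ => habs1 k
    have h3 : a j ≤ Complex.abs (c j * Complex.exp (Complex.I * lam j * x)
          + ∑ k ∈ Finset.univ.erase j, c k * Complex.exp (Complex.I * lam k * x))
        + Complex.abs (∑ k ∈ Finset.univ.erase j, c k * Complex.exp (Complex.I * lam k * x)) := by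
      calc a j = Complex.abs (c j * Complex.exp (Complex.I * lam j * x)) := (habs1 j).symm
        _ = ‖(c j * Complex.exp (Complex.I * lam j * x)
            + ∑ k ∈ Finset.univ.erase j, c k * Complex.exp (Complex.I * lam k * x))
            - ∑ k ∈ Finset.univ.erase j, c k * Complex.exp (Complex.I * lam k * x)‖ := by
            rw [← Complex.norm_eq_abs]
            congr 1
            ring
        _ ≤ ‖c j * Complex.exp (Complex.I * lam j * x)
            + ∑ k ∈ Finset.univ.erase j, c k * Complex.exp (Complex.I * lam k * x)‖
            + ‖∑ k ∈ Finset.univ.erase j, c k * Complex.exp (Complex.I * lam k * x)‖ :=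
            norm_sub_le _ _
        _ = _ := by rw [Complex.norm_eq_abs, Complex.norm_eq_abs]
    rw [Complex.norm_eq_abs]
    linarith
  -- r is a lower bound on the partition values
  have hrlb : ∀ v ∈ partitionValues n a, r ≤ v := by
    rintro v ⟨εs, hεs, rfl⟩
    set θ : Fin n → ℝ := fun k => if c k = 0 then 0
      else (((εs k * a k : ℝ):ℂ)/c k).arg with hθ
    have hterm : ∀ k, c k * Complex.exp ((θ k : ℂ) * Complex.I) = ((εs k * a k : ℝ):ℂ) := by
      intro k
      by_cases hc : c k = 0
      · have hak : a k = 0 := by rw [ha]; simp [hc]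
        simp [hc, hak]
      · have hεabs : |εs k| = 1 := by
          rcases hεs k with h | h <;> rw [h] <;> norm_num
        have hgood : Complex.abs (((εs k * a k : ℝ):ℂ)/c k) = 1 := by
          rw [map_div₀, Complex.abs_ofReal, abs_mul, hεabs, one_mul,
            _root_.abs_of_nonneg (ha0 k), ha]
          exact div_self (fun h => hc (Complex.abs.eq_zero.mp h))
        have hexparg : Complex.exp ((((((εs k * a k : ℝ):ℂ))/c k).arg : ℂ) * Complex.I)
            = ((εs k * a k : ℝ):ℂ)/c k := by
          have h := Complex.abs_mul_exp_arg_mul_I (((εs k * a k : ℝ):ℂ)/c k)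
          rwa [hgood, Complex.ofReal_one, one_mul] at h
        simp only [hθ, if_neg hc]
        rw [hexparg]
        field_simp
    have h0 : (∑ k, c k * Complex.exp ((θ k : ℂ) * Complex.I))
        = ((∑ k, εs k * a k : ℝ):ℂ) := by
      rw [Finset.sum_congr rfl fun k _ => hterm k]
      push_cast
      rfl
    have h1 := hPle θ
    rwa [h0, Complex.abs_ofReal] at h1
  have hnonempty : (partitionValues n a).Nonempty := ⟨_, hmmem⟩
  have hbddS : BddBelow (partitionValues n a) := by
    refine ⟨0, ?_⟩
    rintro v ⟨εs, _, rfl⟩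
    positivity
  refine le_antisymm (le_csInf hnonempty hrlb) ?_
  calc sInf (partitionValues n a) ≤ a j - ∑ k ∈ Finset.univ.erase j, a k :=
      csInf_le hbddS hmmem
    _ ≤ r := hmr
end
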